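/- arXiv:1201.0420 — 2 statements merged into one kernel-verified Lean document; each statement's English description precedes it below -/
import Mathlib

section
/- For all natural numbers p, q, n, the sum over k from 0 to n of C(p+n, k)·C(q+n, n-k)·H_{q+k} equals C(p+q+2n, n)·(H_{q+n} + H_{p+q+n} - H_{p+q+2n}). -/
open Finset BigOperators

def H (n : ℕ) : ℚ := ∑ i ∈ Finset.range n, 1 / (i + 1 : ℚ)

def H2 (n : ℕ) : ℚ := ∑ i ∈ Finset.range n, 1 / ((i + 1 : ℚ))^2

lemma H_succ (n : ℕ) : H (n+1) = H n + 1/(n+1) := by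
  simp [H, Finset.sum_range_succ]

def G (p q n : ℕ) : ℚ :=
  ∑ k ∈ Finset.range (n+1), ((p+n).choose k : ℚ) * ((q+n).choose (n-k) : ℚ) * H (q+k)

def R (p q n : ℕ) : ℚ :=
  ((p+q+2*n).choose n : ℚ) * (H (q+n) + H (p+q+n) - H (p+q+2*n))

lemma vanderN (a b n : ℕ) :
    ∑ k ∈ Finset.range (n+1), (a.choose k) * (b.choose (n-k)) = (a+b).choose n := by
  rw [Nat.add_choose_eq, Finset.Nat.sum_antidiagonal_eq_sum_range_succ_mk]

lemma vander (a b n : ℕ) :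
    ∑ k ∈ Finset.range (n+1), (a.choose k : ℚ) * (b.choose (n-k) : ℚ) = ((a+b).choose n : ℚ) := by
  rw [← vanderN a b n]
  push_cast
  ring

lemma subY (p q m : ℕ) :
    ∑ k ∈ Finset.range (m+1), ((p+m).choose k : ℚ) * ((q+m).choose (m-k) : ℚ) * (1/((q:ℚ)+k+1))
      = ((p+q+2*m+1).choose m : ℚ) / ((q:ℚ)+m+1) := by
  have key : ∀ k ∈ Finset.range (m+1),
      ((p+m).choose k : ℚ) * ((q+m).choose (m-k) : ℚ) * (1/((q:ℚ)+k+1))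
      = ((p+m).choose k : ℚ) * ((q+m+1).choose (m-k) : ℚ) * (1/((q:ℚ)+m+1)) := by
    intro k hk
    rw [Finset.mem_range] at hk
    have hk' : k ≤ m := by omega
    have hnat : (q+m).choose (m-k) * (q+m+1) = (q+m+1).choose (m-k) * (q+k+1) := by
      have := Nat.choose_mul_succ_eq (q+m) (m-k)
      have h2 : q+m+1-(m-k) = q+k+1 := by omega
      rw [h2] at this
      exact this
    have hcast : ((q+m).choose (m-k) : ℚ) * ((q:ℚ)+m+1) = ((q+m+1).choose (m-k) : ℚ) * ((q:ℚ)+k+1) := by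
      exact_mod_cast congrArg (Nat.cast : ℕ → ℚ) hnat
    have h1 : ((q:ℚ)+k+1) ≠ 0 := by positivity
    have h2 : ((q:ℚ)+m+1) ≠ 0 := by positivity
    field_simp
    linear_combination (((p+m).choose k : ℚ)) * hcast
  rw [Finset.sum_congr rfl key]
  have : ∑ k ∈ Finset.range (m+1), ((p+m).choose k : ℚ) * ((q+m+1).choose (m-k) : ℚ) * (1/((q:ℚ)+m+1))
      = (∑ k ∈ Finset.range (m+1), ((p+m).choose k : ℚ) * ((q+m+1).choose (m-k) : ℚ)) * (1/((q:ℚ)+m+1)) := by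
    rw [Finset.sum_mul]
  rw [this, vander]
  have : p+m+(q+m+1) = p+q+2*m+1 := by ring
  rw [this]
  ring


lemma lemA (p q n : ℕ) : G (p+1) q (n+1) = G p q (n+1) + G (p+1) (q+1) n := by
  unfold G
  rw [Finset.sum_range_succ' (fun k => ((p+1+(n+1)).choose k : ℚ) * ((q+(n+1)).choose (n+1-k) : ℚ) * H (q+k)) (n+1),
      Finset.sum_range_succ' (fun k => ((p+(n+1)).choose k : ℚ) * ((q+(n+1)).choose (n+1-k) : ℚ) * H (q+k)) (n+1)]
  have key : ∀ k ∈ Finset.range (n+1),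
      ((p+1+(n+1)).choose (k+1) : ℚ) * ((q+(n+1)).choose (n+1-(k+1)) : ℚ) * H (q+(k+1))
      = ((p+(n+1)).choose (k+1) : ℚ) * ((q+(n+1)).choose (n+1-(k+1)) : ℚ) * H (q+(k+1))
        + ((p+1+n).choose k : ℚ) * ((q+1+n).choose (n-k) : ℚ) * H (q+1+k) := by
    intro k _
    have h1 : (p+1+(n+1)).choose (k+1) = (p+(n+1)).choose k + (p+(n+1)).choose (k+1) := by
      have : p+1+(n+1) = (p+(n+1))+1 := by ring
      rw [this, Nat.choose_succ_succ']
    have h2 : n+1-(k+1) = n-k := by omega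
    have h3 : q+(n+1) = q+1+n := by ring
    have h4 : q+(k+1) = q+1+k := by ring
    have h5 : p+(n+1) = p+1+n := by ring
    rw [h1, h2, h3, h4]
    push_cast
    rw [h5]
    ring
  rw [Finset.sum_congr rfl key, Finset.sum_add_distrib]
  simp
  ring


lemma lemB (p q n : ℕ) :
    G p (q+1) (n+1) = G p q (n+1) + G (p+1) (q+1) n
      + ((p+q+2*n+3).choose (n+1) : ℚ)/((q:ℚ)+n+2) := by
  have hU : ∀ k ∈ Finset.range (n+2),
      ((p+(n+1)).choose k : ℚ) * ((q+(n+1)).choose (n+1-k) : ℚ) * H ((q+1)+k)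
      = ((p+(n+1)).choose k : ℚ) * ((q+(n+1)).choose (n+1-k) : ℚ) * H (q+k)
        + ((p+(n+1)).choose k : ℚ) * ((q+(n+1)).choose (n+1-k) : ℚ) * (1/((q:ℚ)+k+1)) := by
    intro k _
    have h1 : (q+1)+k = (q+k)+1 := by ring
    rw [h1, H_succ]
    push_cast
    ring
  have hUsum : ∑ k ∈ Finset.range (n+2),
      ((p+(n+1)).choose k : ℚ) * ((q+(n+1)).choose (n+1-k) : ℚ) * H ((q+1)+k)
      = G p q (n+1) + ((p+q+2*(n+1)+1).choose (n+1) : ℚ)/((q:ℚ)+(n+1)+1) := by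
    rw [Finset.sum_congr rfl hU, Finset.sum_add_distrib, subY p q (n+1)]
    push_cast
    rfl
  -- main computation
  show ∑ k ∈ Finset.range (n+2),
      ((p+(n+1)).choose k : ℚ) * (((q+1)+(n+1)).choose (n+1-k) : ℚ) * H ((q+1)+k) = _
  rw [Finset.sum_range_succ (fun k => ((p+(n+1)).choose k : ℚ) * (((q+1)+(n+1)).choose (n+1-k) : ℚ) * H ((q+1)+k)) (n+1)]
  have hsplit : ∀ k ∈ Finset.range (n+1),
      ((p+(n+1)).choose k : ℚ) * (((q+1)+(n+1)).choose (n+1-k) : ℚ) * H ((q+1)+k)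
      = ((p+(n+1)).choose k : ℚ) * ((q+(n+1)).choose (n+1-k) : ℚ) * H ((q+1)+k)
        + (((p+1)+n).choose k : ℚ) * (((q+1)+n).choose (n-k) : ℚ) * H ((q+1)+k) := by
    intro k hk
    rw [Finset.mem_range] at hk
    have h1 : (q+1)+(n+1) = (q+(n+1))+1 := by ring
    have h2 : n+1-k = (n-k)+1 := by omega
    have h3 : ((q+(n+1))+1).choose ((n-k)+1) = (q+(n+1)).choose (n-k) + (q+(n+1)).choose ((n-k)+1) := Nat.choose_succ_succ _ _
    have h4 : (q+1)+n = q+(n+1) := by ring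
    have h5 : (p+1)+n = p+(n+1) := by ring
    rw [h1, h2, h3, h4, h5]
    push_cast
    ring
  rw [Finset.sum_congr rfl hsplit, Finset.sum_add_distrib]
  have hlast : ((p+(n+1)).choose (n+1) : ℚ) * (((q+1)+(n+1)).choose (n+1-(n+1)) : ℚ) * H ((q+1)+(n+1))
      = ((p+(n+1)).choose (n+1) : ℚ) * ((q+(n+1)).choose (n+1-(n+1)) : ℚ) * H ((q+1)+(n+1)) := by
    norm_num
  have hback : (∑ k ∈ Finset.range (n+1),
      ((p+(n+1)).choose k : ℚ) * ((q+(n+1)).choose (n+1-k) : ℚ) * H ((q+1)+k))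
      + ((p+(n+1)).choose (n+1) : ℚ) * ((q+(n+1)).choose (n+1-(n+1)) : ℚ) * H ((q+1)+(n+1))
      = ∑ k ∈ Finset.range (n+2),
      ((p+(n+1)).choose k : ℚ) * ((q+(n+1)).choose (n+1-k) : ℚ) * H ((q+1)+k) :=
    (Finset.sum_range_succ (fun k => ((p+(n+1)).choose k : ℚ) * ((q+(n+1)).choose (n+1-k) : ℚ) * H ((q+1)+k)) (n+1)).symm
  have hG : ∑ k ∈ Finset.range (n+1),
      (((p+1)+n).choose k : ℚ) * (((q+1)+n).choose (n-k) : ℚ) * H ((q+1)+k) = G (p+1) (q+1) n := rfl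
  rw [hG]
  rw [hlast] at *
  have : (∑ k ∈ Finset.range (n+1),
      ((p+(n+1)).choose k : ℚ) * ((q+(n+1)).choose (n+1-k) : ℚ) * H ((q+1)+k))
      + G (p+1) (q+1) n
      + ((p+(n+1)).choose (n+1) : ℚ) * ((q+(n+1)).choose (n+1-(n+1)) : ℚ) * H ((q+1)+(n+1))
      = (∑ k ∈ Finset.range (n+2),
      ((p+(n+1)).choose k : ℚ) * ((q+(n+1)).choose (n+1-k) : ℚ) * H ((q+1)+k))
      + G (p+1) (q+1) n := by
    rw [← hback]; ring
  rw [this, hUsum]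
  have e1 : p+q+2*(n+1)+1 = p+q+2*n+3 := by ring
  rw [e1]
  push_cast
  ring

def A (j : ℕ) : ℚ := ∑ k ∈ Finset.range (j+1), ((j.choose k : ℚ))^2 * H k

lemma GA (j : ℕ) : G 0 0 j = A j := by
  unfold G A
  refine Finset.sum_congr rfl (fun k hk => ?_)
  rw [Finset.mem_range] at hk
  have h1 : (0+j).choose (j-k) = j.choose k := by
    rw [Nat.zero_add, Nat.choose_symm (by omega)]
  have h2 : (0+j) = j := by omega
  rw [h1, h2, Nat.zero_add]
  ring

lemma lemC (n : ℕ) : G 0 0 (n+2) = 2 * G 0 0 (n+1)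
    + ((2*n+3).choose (n+1) : ℚ)/((n:ℚ)+2) + 2 * G 1 1 n := by
  rw [GA, GA]
  set m := n+1 with hm
  -- A (m+1) = 2 A m + C(2m+1,m)/(m+1) + 2 * G 1 1 (m-1)
  have step1 : A (m+1) = ∑ k ∈ Finset.range (m+1), ((m+1).choose (k+1) : ℚ)^2 * H (k+1) := by
    unfold A
    rw [Finset.sum_range_succ' (fun k => (((m+1).choose k : ℚ))^2 * H k) (m+1)]
    simp [H]
  have step2 : ∀ k ∈ Finset.range (m+1),
      ((m+1).choose (k+1) : ℚ)^2 * H (k+1)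
      = ((m.choose k : ℚ))^2 * H (k+1) + 2 * ((m.choose k : ℚ) * (m.choose (k+1) : ℚ) * H (k+1))
        + ((m.choose (k+1) : ℚ))^2 * H (k+1) := by
    intro k _
    rw [Nat.choose_succ_succ']
    push_cast
    ring
  have hs := subY 0 0 m
  simp only [Nat.zero_add, Nat.cast_zero, zero_add] at hs
  have hT1 : ∑ k ∈ Finset.range (m+1), ((m.choose k : ℚ))^2 * H (k+1)
      = A m + ((2*m+1).choose m : ℚ)/((m:ℚ)+1) := by
    have e : ∀ k ∈ Finset.range (m+1), ((m.choose k : ℚ))^2 * H (k+1)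
        = ((m.choose k : ℚ))^2 * H k + (m.choose k : ℚ) * (m.choose (m-k) : ℚ) * (1/((k:ℚ)+1)) := by
      intro k hk
      rw [Finset.mem_range] at hk
      rw [H_succ, Nat.choose_symm (by omega : k ≤ m)]
      push_cast
      ring
    rw [Finset.sum_congr rfl e, Finset.sum_add_distrib, hs]
    norm_num [A]
  have hT3 : ∑ k ∈ Finset.range (m+1), ((m.choose (k+1) : ℚ))^2 * H (k+1) = A m := by
    have e := Finset.sum_range_succ' (fun k => ((m.choose k : ℚ))^2 * H k) (m+1)
    have e2 : ∑ k ∈ Finset.range (m+2), ((m.choose k : ℚ))^2 * H k = A m := by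
      rw [Finset.sum_range_succ]
      simp [A]
    have h0 : ((m.choose 0 : ℚ))^2 * H 0 = 0 := by simp [H]
    rw [e2] at e
    rw [h0, add_zero] at e
    exact e.symm
  have hT2 : ∑ k ∈ Finset.range (m+1), (m.choose k : ℚ) * (m.choose (k+1) : ℚ) * H (k+1)
      = G 1 1 n := by
    rw [Finset.sum_range_succ]
    have hz : (m.choose (m+1) : ℚ) = 0 := by
      norm_cast
      exact Nat.choose_eq_zero_of_lt (by omega)
    rw [hz]
    have e : ∀ k ∈ Finset.range m, (m.choose k : ℚ) * (m.choose (k+1) : ℚ) * H (k+1)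
        = ((1+n).choose k : ℚ) * ((1+n).choose (n-k) : ℚ) * H (1+k) := by
      intro k hk
      rw [Finset.mem_range] at hk
      have h1 : m.choose (k+1) = m.choose (m-(k+1)) := (Nat.choose_symm (by omega)).symm
      have h2 : m-(k+1) = n-k := by omega
      have h3 : m = 1+n := by omega
      have h4 : k+1 = 1+k := by omega
      rw [h1, h2, h3, h4]
    rw [Finset.sum_congr rfl e]
    have hmn : m = n+1 := hm
    rw [hmn]
    simp [G]
  rw [step1, Finset.sum_congr rfl step2, Finset.sum_add_distrib, Finset.sum_add_distrib,
    hT1, hT3, ← Finset.mul_sum, hT2]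
  have h2 : (2*m+1).choose m = (2*n+3).choose (n+1) := by
    have e3 : 2*m+1 = 2*n+3 := by omega
    rw [e3, hm]
  rw [h2, hm]
  push_cast
  ring


set_option maxHeartbeats 1000000 in
lemma RA (p q n : ℕ) : R (p+1) q (n+1) = R p q (n+1) + R (p+1) (q+1) n := by
  unfold R
  have a1 : p+1+q+2*(n+1) = (p+q+2*n+2)+1 := by omega
  have a2 : p+q+2*(n+1) = p+q+2*n+2 := by omega
  have a3 : p+1+(q+1)+2*n = p+q+2*n+2 := by omega
  have a4 : q+(n+1) = q+n+1 := by omega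
  have a5 : (q+1)+n = q+n+1 := by omega
  have a6 : p+1+q+(n+1) = (p+q+n+1)+1 := by omega
  have a7 : p+q+(n+1) = p+q+n+1 := by omega
  have a8 : p+1+(q+1)+n = (p+q+n+1)+1 := by omega
  rw [a1, a2, a3, a4, a5, a6, a7, a8, H_succ (p+q+2*n+2), H_succ (p+q+n+1)]
  have pas : (((p+q+2*n+2)+1).choose (n+1) : ℚ)
      = ((p+q+2*n+2).choose n : ℚ) + ((p+q+2*n+2).choose (n+1) : ℚ) := by
    exact_mod_cast congrArg (Nat.cast : ℕ → ℚ) (Nat.choose_succ_succ (p+q+2*n+2) n)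
  have keyN : ((p+q+2*n+2)+1) * ((p+q+2*n+2).choose n) = ((p+q+2*n+2)+1).choose (n+1) * (n+1) := by
    simpa [Nat.succ_eq_add_one] using Nat.add_one_mul_choose_eq (p+q+2*n+2) n
  have key : (((p:ℚ)+q+2*n+2)+1) * ((p+q+2*n+2).choose n : ℚ)
      = (((p+q+2*n+2).choose n : ℚ) + ((p+q+2*n+2).choose (n+1) : ℚ)) * ((n:ℚ)+1) := by
    have hc := congrArg (Nat.cast : ℕ → ℚ) keyN
    push_cast at hc
    rw [pas] at hc
    push_cast
    linarith [hc]
  rw [pas]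
  set x := ((p+q+2*n+2).choose (n+1) : ℚ) with hx
  set y := ((p+q+2*n+2).choose n : ℚ) with hy
  set A := H (q+n+1)
  set B := H (p+q+n+1)
  set D := H (p+q+2*n+2)
  have h1 : ((p+q+n+1 : ℕ):ℚ) + 1 ≠ 0 := by positivity
  have h2 : ((p+q+2*n+2 : ℕ):ℚ) + 1 ≠ 0 := by positivity
  push_cast at h1 h2 ⊢
  field_simp
  linear_combination (-1 : ℚ) * key

set_option maxHeartbeats 1000000 in
lemma RB (p q n : ℕ) : R p (q+1) (n+1) = R p q (n+1) + R (p+1) (q+1) n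
    + (((p+q+2*n+3).choose (n+1) : ℚ))/((q:ℚ)+n+2) := by
  unfold R
  have b1 : p+(q+1)+2*(n+1) = (p+q+2*n+2)+1 := by omega
  have b2 : p+q+2*(n+1) = p+q+2*n+2 := by omega
  have b3 : p+1+(q+1)+2*n = p+q+2*n+2 := by omega
  have b4 : (q+1)+(n+1) = (q+n+1)+1 := by omega
  have b5 : q+(n+1) = q+n+1 := by omega
  have b6 : (q+1)+n = q+n+1 := by omega
  have b7 : p+(q+1)+(n+1) = (p+q+n+1)+1 := by omega
  have b8 : p+q+(n+1) = p+q+n+1 := by omega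
  have b9 : p+1+(q+1)+n = (p+q+n+1)+1 := by omega
  have b10 : p+q+2*n+3 = (p+q+2*n+2)+1 := by omega
  rw [b1, b2, b3, b4, b5, b6, b7, b8, b9, b10,
    H_succ (q+n+1), H_succ (p+q+n+1), H_succ (p+q+2*n+2)]
  have pas : (((p+q+2*n+2)+1).choose (n+1) : ℚ)
      = ((p+q+2*n+2).choose n : ℚ) + ((p+q+2*n+2).choose (n+1) : ℚ) := by
    exact_mod_cast congrArg (Nat.cast : ℕ → ℚ) (Nat.choose_succ_succ (p+q+2*n+2) n)
  have keyN : ((p+q+2*n+2)+1) * ((p+q+2*n+2).choose n) = ((p+q+2*n+2)+1).choose (n+1) * (n+1) := by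
    simpa [Nat.succ_eq_add_one] using Nat.add_one_mul_choose_eq (p+q+2*n+2) n
  have key : (((p:ℚ)+q+2*n+2)+1) * ((p+q+2*n+2).choose n : ℚ)
      = (((p+q+2*n+2).choose n : ℚ) + ((p+q+2*n+2).choose (n+1) : ℚ)) * ((n:ℚ)+1) := by
    have hc := congrArg (Nat.cast : ℕ → ℚ) keyN
    push_cast at hc
    rw [pas] at hc
    push_cast
    linarith [hc]
  rw [pas]
  set x := ((p+q+2*n+2).choose (n+1) : ℚ) with hx
  set y := ((p+q+2*n+2).choose n : ℚ) with hy
  set A := H (q+n+1)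
  set B := H (p+q+n+1)
  set D := H (p+q+2*n+2)
  have h1 : ((p+q+n+1 : ℕ):ℚ) + 1 ≠ 0 := by positivity
  have h2 : ((p+q+2*n+2 : ℕ):ℚ) + 1 ≠ 0 := by positivity
  have h3 : ((q+n+1 : ℕ):ℚ) + 1 ≠ 0 := by positivity
  have h4 : ((q:ℚ)+n+2) ≠ 0 := by positivity
  push_cast at h1 h2 h3 ⊢
  field_simp
  linear_combination (-((q:ℚ)+n+2)^2) * key

set_option maxHeartbeats 1000000 in
lemma RC (n : ℕ) : R 0 0 (n+2) = 2 * R 0 0 (n+1)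
    + (((2*n+3).choose (n+1) : ℚ))/((n:ℚ)+2) + 2 * R 1 1 n := by
  unfold R
  simp only [Nat.zero_add]
  rw [show 2*(n+2) = (2*n+3)+1 from by omega,
      show 2*(n+1) = 2*n+2 from by omega,
      show 1+1+2*n = 2*n+2 from by omega,
      show 1+1+n = (n+1)+1 from by omega,
      show 1+n = n+1 from by omega,
      show n+2 = (n+1)+1 from by omega,
      H_succ (n+1), H_succ (2*n+3)]
  have eH : H (2*n+3) = H (2*n+2) + 1/(((2*n+2 : ℕ):ℚ)+1) := by
    rw [show (2*n+3:ℕ) = (2*n+2)+1 from by omega, H_succ]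
  rw [eH]
  -- binomial facts
  have pas1 : ((2*n+3).choose (n+1) : ℚ)
      = ((2*n+2).choose n : ℚ) + ((2*n+2).choose (n+1) : ℚ) := by
    rw [show (2*n+3:ℕ) = (2*n+2)+1 from by omega]
    exact_mod_cast congrArg (Nat.cast : ℕ → ℚ) (Nat.choose_succ_succ (2*n+2) n)
  have symm1 : (2*n+3).choose (n+2) = (2*n+3).choose (n+1) := by
    have := Nat.choose_symm (by omega : n+1 ≤ 2*n+3)
    have e : 2*n+3-(n+1) = n+2 := by omega
    rw [e] at this
    exact this
  have pasw : ((((2*n+3)+1).choose ((n+1)+1)) : ℚ)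
      = 2*(((2*n+2).choose n : ℚ) + ((2*n+2).choose (n+1) : ℚ)) := by
    have e := Nat.choose_succ_succ (2*n+3) (n+1)
    simp only [Nat.succ_eq_add_one] at e
    rw [show (n+1)+1 = n+2 from by omega, symm1] at e
    rw [e]
    push_cast
    rw [pas1]
    ring
  have k1N : (2*n+3) * ((2*n+2).choose (n+1)) = (2*n+3).choose (n+2) * (n+2) := by
    simpa [Nat.succ_eq_add_one, show (2*n+2)+1 = 2*n+3 from by omega] using Nat.add_one_mul_choose_eq (2*n+2) (n+1)
  have k2N : (2*n+3) * ((2*n+2).choose n) = (2*n+3).choose (n+1) * (n+1) := by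
    simpa [Nat.succ_eq_add_one, show (2*n+2)+1 = 2*n+3 from by omega] using Nat.add_one_mul_choose_eq (2*n+2) n
  have keyuv : ((n:ℚ)+1) * ((2*n+2).choose (n+1) : ℚ) = ((n:ℚ)+2) * ((2*n+2).choose n : ℚ) := by
    have hc1 := congrArg (Nat.cast : ℕ → ℚ) k1N
    have hc2 := congrArg (Nat.cast : ℕ → ℚ) k2N
    rw [symm1] at hc1
    push_cast at hc1 hc2
    have h5 : ((2:ℚ)*n+3) ≠ 0 := by positivity
    nlinarith [hc1, hc2]
  rw [pasw, pas1]
  set u := ((2*n+2).choose (n+1) : ℚ) with hu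
  set v := ((2*n+2).choose n : ℚ) with hv
  set h := H (n+1)
  set s := H (2*n+2)
  have h1 : ((n+1 : ℕ):ℚ) + 1 ≠ 0 := by positivity
  have h2 : ((2*n+3 : ℕ):ℚ) + 1 ≠ 0 := by positivity
  have h3 : ((2*n+2 : ℕ):ℚ) + 1 ≠ 0 := by positivity
  have h4 : ((n:ℚ)+2) ≠ 0 := by positivity
  push_cast at h1 h2 h3 ⊢
  field_simp
  linear_combination (4*((n:ℚ)+2)^2) * keyuv


lemma base0 (p q : ℕ) : G p q 0 = R p q 0 := by
  simp [G, R]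

lemma base1 : G 0 0 1 = R 0 0 1 := by
  norm_num [G, R, H, Finset.sum_range_succ]

theorem main (n : ℕ) : ∀ p q, G p q n = R p q n := by
  induction n using Nat.strong_induction_on with
  | _ n ih =>
    match n with
    | 0 => exact base0
    | (m+1) =>
      have IHm : ∀ p q, G p q m = R p q m := ih m (by omega)
      have base00 : G 0 0 (m+1) = R 0 0 (m+1) := by
        match m with
        | 0 => exact base1
        | (k+1) =>
          calc G 0 0 (k+2) = 2*G 0 0 (k+1) + ((2*k+3).choose (k+1) : ℚ)/((k:ℚ)+2) + 2*G 1 1 k := lemC k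
            _ = 2*R 0 0 (k+1) + ((2*k+3).choose (k+1) : ℚ)/((k:ℚ)+2) + 2*R 1 1 k := by
                rw [ih (k+1) (by omega) 0 0, ih k (by omega) 1 1]
            _ = R 0 0 (k+2) := (RC k).symm
      have hp0 : ∀ p, G p 0 (m+1) = R p 0 (m+1) := by
        intro p
        induction p with
        | zero => exact base00
        | succ p ihp =>
          calc G (p+1) 0 (m+1) = G p 0 (m+1) + G (p+1) (0+1) m := lemA p 0 m
            _ = R p 0 (m+1) + R (p+1) (0+1) m := by rw [ihp, IHm]
            _ = R (p+1) 0 (m+1) := (RA p 0 m).symm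
      intro p q
      induction q generalizing p with
      | zero => exact hp0 p
      | succ q ihq =>
        calc G p (q+1) (m+1)
            = G p q (m+1) + G (p+1) (q+1) m + ((p+q+2*m+3).choose (m+1) : ℚ)/((q:ℚ)+m+2) := lemB p q m
          _ = R p q (m+1) + R (p+1) (q+1) m + ((p+q+2*m+3).choose (m+1) : ℚ)/((q:ℚ)+m+2) := by
              rw [ihq p, IHm]
          _ = R p (q+1) (m+1) := (RB p q m).symm

theorem stmt12 (p q n : ℕ) :
    ∑ k ∈ Finset.range (n + 1),
        ((p + n).choose k : ℚ) * ((q + n).choose (n - k) : ℚ) * H (q + k)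
      = ((p + q + 2 * n).choose n : ℚ)
          * (H (q + n) + H (p + q + n) - H (p + q + 2 * n)) := main n p q
end

section
/- For all natural numbers n ≥ 1, the sum over k from 0 to n of (-1)^k·C(n,k)·H_k² equals (1/n)·(H_n - 2/n). -/
open Finset BigOperators

lemma Hsucc (n : ℕ) : H (n+1) = H n + 1/((n:ℚ)+1) := by
  simp [H, Finset.sum_range_succ]

lemma chooseq (n k : ℕ) : ((n:ℚ)+1) * (n.choose k : ℚ) = ((n+1).choose (k+1) : ℚ) * ((k:ℚ)+1) := by
  exact_mod_cast congrArg (Nat.cast : ℕ → ℚ) (Nat.add_one_mul_choose_eq n k)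

lemma altsum (n : ℕ) : ∑ k ∈ range (n+1), (-1:ℚ)^k * ((n+1).choose (k+1) : ℚ) = 1 := by
  have h : (∑ m ∈ range (n + 2), ((-1:ℚ) ^ m * ((n+1).choose m : ℚ))) = 0 := by
    have := Int.alternating_sum_range_choose_of_ne (n := n+1) (by omega)
    exact_mod_cast congrArg (Int.cast : ℤ → ℚ) this
  rw [Finset.sum_range_succ'] at h
  have h2 : -∑ k ∈ range (n+1), (-1:ℚ)^k * ((n+1).choose (k+1) : ℚ) + 1 = 0 := by
    simpa [pow_succ] using h
  linarith

lemma lemP (n : ℕ) : ∑ k ∈ range (n+1), (-1:ℚ)^k * (n.choose k : ℚ) / ((k:ℚ)+1) = 1/((n:ℚ)+1) := by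
  have hn : ((n:ℚ)+1) ≠ 0 := by positivity
  have step : ∀ k ∈ range (n+1), (-1:ℚ)^k * (n.choose k : ℚ) / ((k:ℚ)+1)
      = (-1:ℚ)^k * ((n+1).choose (k+1) : ℚ) * (1/((n:ℚ)+1)) := by
    intro k _
    have hk : ((k:ℚ)+1) ≠ 0 := by positivity
    have h := chooseq n k
    field_simp
    linear_combination h
  rw [Finset.sum_congr rfl step, ← Finset.sum_mul, altsum, one_mul]

lemma lemB_s17 (n : ℕ) : ∑ k ∈ range (n+1), (-1:ℚ)^k * (n.choose k : ℚ) / (k:ℚ) = -H n := by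
  induction n with
  | zero => simp [H]
  | succ n ih =>
    rw [Finset.sum_range_succ']
    have hsplit : ∀ j ∈ range (n+1), (-1:ℚ)^(j+1) * ((n+1).choose (j+1) : ℚ) / ((j+1:ℕ):ℚ)
        = (-((-1:ℚ)^j * (n.choose j : ℚ) / ((j:ℚ)+1)))
          + (-1:ℚ)^(j+1) * (n.choose (j+1) : ℚ) / ((j:ℚ)+1) := by
      intro j _
      rw [Nat.choose_succ_succ]
      push_cast
      ring
    rw [Finset.sum_congr rfl hsplit, Finset.sum_add_distrib, Finset.sum_neg_distrib, lemP]
    have hA2 : ∑ j ∈ range (n+1), (-1:ℚ)^(j+1) * (n.choose (j+1) : ℚ) / ((j:ℚ)+1)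
        = ∑ k ∈ range (n+1), (-1:ℚ)^k * (n.choose k : ℚ) / (k:ℚ) := by
      rw [Finset.sum_range_succ, Finset.sum_range_succ' (fun k => (-1:ℚ)^k * (n.choose k : ℚ) / (k:ℚ))]
      simp [Nat.choose_succ_self]
    rw [hA2, ih, Hsucc]
    push_cast
    ring

lemma H0 : H 0 = 0 := by simp [H]

lemma lemA_s17 (n : ℕ) : ∑ k ∈ range (n+2), (-1:ℚ)^k * ((n+1).choose k : ℚ) * H k = -(1/((n:ℚ)+1)) := by
  rw [Finset.sum_range_succ']
  have hsplit : ∀ j ∈ range (n+1), (-1:ℚ)^(j+1) * ((n+1).choose (j+1) : ℚ) * H (j+1)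
      = (-1:ℚ)^(j+1) * (n.choose (j+1) : ℚ) * H (j+1)
        + (-((-1:ℚ)^j * (n.choose j : ℚ) * H j))
        + (-((-1:ℚ)^j * (n.choose j : ℚ) / ((j:ℚ)+1))) := by
    intro j _
    rw [Nat.choose_succ_succ, Hsucc]
    push_cast
    ring
  rw [Finset.sum_congr rfl hsplit, Finset.sum_add_distrib, Finset.sum_add_distrib,
    Finset.sum_neg_distrib, Finset.sum_neg_distrib, lemP]
  have hA2 : ∑ j ∈ range (n+1), (-1:ℚ)^(j+1) * (n.choose (j+1) : ℚ) * H (j+1)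
      = ∑ k ∈ range (n+1), (-1:ℚ)^k * (n.choose k : ℚ) * H k := by
    rw [Finset.sum_range_succ,
      Finset.sum_range_succ' (fun k => (-1:ℚ)^k * (n.choose k : ℚ) * H k)]
    simp [Nat.choose_succ_self, H0]
  rw [hA2]
  simp [H0]

lemma lemC_s17 (n : ℕ) : ∑ k ∈ range (n+1), (-1:ℚ)^k * (n.choose k : ℚ) / ((k:ℚ)+1)^2
    = H (n+1) / ((n:ℚ)+1) := by
  have hn : ((n:ℚ)+1) ≠ 0 := by positivity
  have step : ∀ k ∈ range (n+1), (-1:ℚ)^k * (n.choose k : ℚ) / ((k:ℚ)+1)^2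
      = ((-1:ℚ)^(k+1) * ((n+1).choose (k+1) : ℚ) / ((k+1:ℕ):ℚ)) * (-(1/((n:ℚ)+1))) := by
    intro k _
    have hk : ((k:ℚ)+1) ≠ 0 := by positivity
    have h := chooseq n k
    push_cast
    field_simp
    linear_combination ((-1:ℚ)^k) * h
  rw [Finset.sum_congr rfl step, ← Finset.sum_mul]
  have hB : ∑ k ∈ range (n+1), (-1:ℚ)^(k+1) * ((n+1).choose (k+1) : ℚ) / ((k+1:ℕ):ℚ)
      = -H (n+1) := by
    rw [← lemB_s17 (n+1), Finset.sum_range_succ'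
      (fun k => (-1:ℚ)^k * ((n+1).choose k : ℚ) / (k:ℚ))]
    simp
  rw [hB]
  ring

lemma lemT (n : ℕ) : ∑ k ∈ range (n+1), (-1:ℚ)^k * (n.choose k : ℚ) * H k / ((k:ℚ)+1)
    = (1/((n:ℚ)+1) - H (n+1)) / ((n:ℚ)+1) := by
  have hn : ((n:ℚ)+1) ≠ 0 := by positivity
  have step : ∀ k ∈ range (n+1), (-1:ℚ)^k * (n.choose k : ℚ) * H k / ((k:ℚ)+1)
      = ((-1:ℚ)^(k+1) * ((n+1).choose (k+1) : ℚ) * H (k+1)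
         + (-((-1:ℚ)^(k+1) * ((n+1).choose (k+1) : ℚ) / ((k+1:ℕ):ℚ)))) * (-(1/((n:ℚ)+1))) := by
    intro k _
    have hk : ((k:ℚ)+1) ≠ 0 := by positivity
    have h := chooseq n k
    rw [Hsucc]
    push_cast
    field_simp
    linear_combination ((-1:ℚ)^k * H k) * h
  rw [Finset.sum_congr rfl step, ← Finset.sum_mul, Finset.sum_add_distrib, Finset.sum_neg_distrib]
  have h1 : ∑ k ∈ range (n+1), (-1:ℚ)^(k+1) * ((n+1).choose (k+1) : ℚ) * H (k+1)
      = -(1/((n:ℚ)+1)) := by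
    rw [← lemA_s17 n, Finset.sum_range_succ' (fun k => (-1:ℚ)^k * ((n+1).choose k : ℚ) * H k)]
    simp [H0]
  have hB : ∑ k ∈ range (n+1), (-1:ℚ)^(k+1) * ((n+1).choose (k+1) : ℚ) / ((k+1:ℕ):ℚ)
      = -H (n+1) := by
    rw [← lemB_s17 (n+1), Finset.sum_range_succ' (fun k => (-1:ℚ)^k * ((n+1).choose k : ℚ) / (k:ℚ))]
    simp
  rw [h1, hB]
  ring

theorem stmt17' (m : ℕ) :
    ∑ k ∈ Finset.range (m + 2), (-1 : ℚ)^k * ((m+1).choose k : ℚ) * H k^2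
      = 1 / ((m:ℚ)+1) * (H (m+1) - 2 / ((m:ℚ)+1)) := by
  rw [Finset.sum_range_succ']
  have hsplit : ∀ j ∈ range (m+1), (-1:ℚ)^(j+1) * ((m+1).choose (j+1) : ℚ) * H (j+1)^2
      = (-1:ℚ)^(j+1) * (m.choose (j+1) : ℚ) * H (j+1)^2
        + (-((-1:ℚ)^j * (m.choose j : ℚ) * H j^2))
        + (-(2 * ((-1:ℚ)^j * (m.choose j : ℚ) * H j / ((j:ℚ)+1))))
        + (-((-1:ℚ)^j * (m.choose j : ℚ) / ((j:ℚ)+1)^2)) := by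
    intro j _
    have hj : ((j:ℚ)+1) ≠ 0 := by positivity
    rw [Nat.choose_succ_succ, Hsucc]
    push_cast
    field_simp
    ring
  rw [Finset.sum_congr rfl hsplit, Finset.sum_add_distrib, Finset.sum_add_distrib,
    Finset.sum_add_distrib, Finset.sum_neg_distrib, Finset.sum_neg_distrib,
    Finset.sum_neg_distrib, ← Finset.mul_sum, lemT, lemC_s17]
  have hX : ∑ j ∈ range (m+1), (-1:ℚ)^(j+1) * (m.choose (j+1) : ℚ) * H (j+1)^2
      = ∑ k ∈ range (m+1), (-1:ℚ)^k * (m.choose k : ℚ) * H k^2 := by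
    rw [Finset.sum_range_succ,
      Finset.sum_range_succ' (fun k => (-1:ℚ)^k * (m.choose k : ℚ) * H k^2)]
    simp [Nat.choose_succ_self, H0]
  rw [hX]
  have hm : ((m:ℚ)+1) ≠ 0 := by positivity
  simp [H0]
  field_simp
  ring

theorem stmt17 (n : ℕ) (hn : 1 ≤ n) :
    ∑ k ∈ Finset.range (n + 1), (-1 : ℚ)^k * (n.choose k : ℚ) * H k^2
      = 1 / n * (H n - 2 / n) := by
  obtain ⟨m, rfl⟩ : ∃ m, n = m + 1 := ⟨n - 1, by omega⟩
  have := stmt17' m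
  push_cast
  convert this using 2
end
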